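/- arXiv:1605.02584 — 4 statements merged into one kernel-verified Lean document; each statement's English description precedes it below -/
import Mathlib

section
/- Let c > 0, let L = 2/√(5c), and let Q_c(x) = (3c/2)·cosh^{-2}(√c·x/2). Then the functions w₁(x,y) = Q_c(x)^{3/2}·cos(y/L) and w₂(x,y) = Q_c(x)^{3/2}·sin(y/L) satisfy the linearized stationary equation −Δw + c·w − 2·Q_c(x)·w = 0 at every point (x,y) ∈ ℝ², where Δ = ∂_x² + ∂_y². (These are the extra elements of the kernel of the linearized operator 𝕃_c at the critical period L = 2/√(5c).) -/
lemma zk_aux (c : ℝ) (hc : 0 < c) (L : ℝ) (hL : L = 2 / Real.sqrt (5 * c))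
    (Q : ℝ → ℝ)
    (hQ : ∀ x, Q x = (3 * c / 2) * (Real.cosh (Real.sqrt c * x / 2))⁻¹ ^ 2)
    (φ φ' : ℝ → ℝ)
    (hφ : ∀ t, HasDerivAt φ (φ' t) t)
    (hφ' : ∀ t, HasDerivAt φ' (-(1/L)^2 * φ t) t)
    (w : ℝ → ℝ → ℝ)
    (hw : ∀ x y, w x y = (Q x) ^ ((3 : ℝ) / 2) * φ y) :
    ∀ x y : ℝ,
      -(deriv (deriv (fun x' => w x' y)) x + deriv (deriv (fun y' => w x y')) y)
          + c * w x y - 2 * Q x * w x y = 0 := by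
  intro x y
  set s : ℝ := Real.sqrt c / 2 with hs
  have hs2 : s ^ 2 = c / 4 := by
    rw [hs, div_pow, Real.sq_sqrt hc.le]; norm_num
  have hcne : ∀ t : ℝ, Real.cosh (s*t) ≠ 0 := fun t => (Real.cosh_pos (s*t)).ne'
  -- the profile function
  set g : ℝ → ℝ := fun t => (Real.cosh (s*t))⁻¹ ^ 3 with hgdef
  set g1 : ℝ → ℝ := fun t => -3*s*(Real.sinh (s*t) * (Real.cosh (s*t))⁻¹ ^ 4) with hg1def
  have hu : ∀ t : ℝ, HasDerivAt (fun t : ℝ => Real.cosh (s*t)) (s * Real.sinh (s*t)) t := by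
    intro t
    have h := (Real.hasDerivAt_cosh (s*t)).comp t ((hasDerivAt_id t).const_mul s)
    simp only [Function.comp_def, mul_one] at h
    exact h.congr_deriv (by ring)
  have hus : ∀ t : ℝ, HasDerivAt (fun t : ℝ => Real.sinh (s*t)) (s * Real.cosh (s*t)) t := by
    intro t
    have h := (Real.hasDerivAt_sinh (s*t)).comp t ((hasDerivAt_id t).const_mul s)
    simp only [Function.comp_def, mul_one] at h
    exact h.congr_deriv (by ring)
  have hv : ∀ t : ℝ, HasDerivAt (fun t : ℝ => (Real.cosh (s*t))⁻¹)
      (-(s * Real.sinh (s*t)) / Real.cosh (s*t) ^ 2) t := fun t => (hu t).inv (hcne t)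
  have hg : ∀ t, HasDerivAt g (g1 t) t := by
    intro t
    have := (hv t).pow 3
    refine this.congr_deriv ?_ |>.congr_of_eventuallyEq (Filter.Eventually.of_forall fun _ => rfl)
    have := hcne t
    simp only [hg1def, Pi.pow_apply, Nat.cast_ofNat, Nat.reduceSub]
    field_simp
  have hg1 : ∀ t, HasDerivAt g1 (9 * s^2 * g t - 12 * s^2 * (Real.cosh (s*t))⁻¹ ^ 5) t := by
    intro t
    have h := (((hus t).mul ((hv t).pow 4)).const_mul (-3*s))
    refine h.congr_deriv ?_ |>.congr_of_eventuallyEq (Filter.Eventually.of_forall fun _ => rfl)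
    have h0 := hcne t
    have h1 : Real.cosh (s*t) ^ 2 = Real.sinh (s*t) ^ 2 + 1 := Real.cosh_sq (s*t)
    simp only [hgdef, Pi.pow_apply, Pi.mul_apply, Nat.cast_ofNat, Nat.reduceSub]
    field_simp
    linear_combination (-3 * Real.sqrt c ^ 2) * h1
  -- second x-derivative
  have hgd : deriv g = g1 := funext fun t => (hg t).deriv
  have hA : ∀ x', (Q x') ^ ((3:ℝ)/2) = (3*c/2) ^ ((3:ℝ)/2) * g x' := by
    intro x'
    have hvpos : (0:ℝ) < (Real.cosh (s*x'))⁻¹ := inv_pos.mpr (Real.cosh_pos _)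
    have harg : Real.sqrt c * x' / 2 = s * x' := by rw [hs]; ring
    rw [hQ, harg, Real.mul_rpow (by positivity) (by positivity)]
    congr 1
    show ((Real.cosh (s*x'))⁻¹ ^ (2:ℕ) : ℝ) ^ ((3:ℝ)/2) = (Real.cosh (s*x'))⁻¹ ^ 3
    rw [← Real.rpow_natCast ((Real.cosh (s*x'))⁻¹) 2, ← Real.rpow_natCast ((Real.cosh (s*x'))⁻¹) 3,
      ← Real.rpow_mul hvpos.le]
    norm_num
  set A : ℝ := (3*c/2) ^ ((3:ℝ)/2) with hAdef
  -- x-direction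
  have hwx : (fun x' => w x' y) = fun x' => (A * φ y) * g x' := by
    funext t; rw [hw, hA]; ring
  have hdx : deriv (fun x' => w x' y) = fun x' => (A * φ y) * g1 x' := by
    rw [hwx]; exact funext fun t => ((hg t).const_mul _).deriv
  have hdxx : deriv (deriv (fun x' => w x' y)) x
      = (A * φ y) * (9 * s^2 * g x - 12 * s^2 * (Real.cosh (s*x))⁻¹ ^ 5) := by
    rw [hdx]; exact ((hg1 x).const_mul _).deriv
  -- y-direction
  have hwy : (fun y' => w x y') = fun y' => (A * g x) * φ y' := by
    funext t; rw [hw, hA x]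
  have hdy : deriv (fun y' => w x y') = fun y' => (A * g x) * φ' y' := by
    rw [hwy]; exact funext fun t => ((hφ t).const_mul _).deriv
  have hdyy : deriv (deriv (fun y' => w x y')) y = (A * g x) * (-(1/L)^2 * φ y) := by
    rw [hdy]; exact ((hφ' y).const_mul _).deriv
  -- frequency relation
  have h5c : Real.sqrt (5*c) ≠ 0 := by positivity
  have hLinv : (1/L)^2 = 5*c/4 := by
    rw [hL]
    rw [one_div, inv_div, div_pow, Real.sq_sqrt (by positivity)]
    norm_num
  -- assemble
  rw [hdxx, hdyy, hw, hA x, hLinv, hQ]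
  have harg : Real.sqrt c * x / 2 = s * x := by rw [hs]; ring
  rw [harg]
  simp only [hgdef]
  linear_combination (A * φ y * (12 * (Real.cosh (s*x))⁻¹ ^ 5 - 9 * (Real.cosh (s*x))⁻¹ ^ 3)) * hs2

theorem kernel_elements_at_critical_period
    (c : ℝ) (hc : 0 < c) (L : ℝ) (hL : L = 2 / Real.sqrt (5 * c))
    (Q : ℝ → ℝ)
    (hQ : ∀ x, Q x = (3 * c / 2) * (Real.cosh (Real.sqrt c * x / 2))⁻¹ ^ 2)
    (w₁ w₂ : ℝ → ℝ → ℝ)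
    (hw₁ : ∀ x y, w₁ x y = (Q x) ^ ((3 : ℝ) / 2) * Real.cos (y / L))
    (hw₂ : ∀ x y, w₂ x y = (Q x) ^ ((3 : ℝ) / 2) * Real.sin (y / L)) :
    ∀ x y : ℝ,
      (-(deriv (deriv (fun x' => w₁ x' y)) x + deriv (deriv (fun y' => w₁ x y')) y)
          + c * w₁ x y - 2 * Q x * w₁ x y = 0) ∧
      (-(deriv (deriv (fun x' => w₂ x' y)) x + deriv (deriv (fun y' => w₂ x y')) y)
          + c * w₂ x y - 2 * Q x * w₂ x y = 0) := by
  have hcos : ∀ t : ℝ, HasDerivAt (fun t => Real.cos (t/L)) (-Real.sin (t/L) * (1/L)) t := by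
    intro t
    have h := (Real.hasDerivAt_cos (t/L)).comp t ((hasDerivAt_id t).div_const L)
    simpa [Function.comp_def] using h
  have hsin : ∀ t : ℝ, HasDerivAt (fun t => Real.sin (t/L)) (Real.cos (t/L) * (1/L)) t := by
    intro t
    have h := (Real.hasDerivAt_sin (t/L)).comp t ((hasDerivAt_id t).div_const L)
    simpa [Function.comp_def] using h
  have hcos' : ∀ t : ℝ, HasDerivAt (fun t => -Real.sin (t/L) * (1/L))
      (-(1/L)^2 * Real.cos (t/L)) t := by
    intro t
    have h := ((hsin t).neg).mul_const (1/L)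
    exact h.congr_deriv (by ring)
  have hsin' : ∀ t : ℝ, HasDerivAt (fun t => Real.cos (t/L) * (1/L))
      (-(1/L)^2 * Real.sin (t/L)) t := by
    intro t
    have h := (hcos t).mul_const (1/L)
    exact h.congr_deriv (by ring)
  intro x y
  exact ⟨zk_aux c hc L hL Q hQ _ _ hcos hcos' w₁ hw₁ x y,
         zk_aux c hc L hL Q hQ _ _ hsin hsin' w₂ hw₂ x y⟩
end

section
/- Let c > 0, Q_c(x) = (3c/2)·cosh^{-2}(√c·x/2), φ_c(x) = √c·tanh(√c·x/2), and let ℒ_c u = −u'' + c·u − 2·Q_c·u. Then for every x ∈ ℝ: ((ℒ_c + 5c/4)(∂_x(Q_c^{3/2})))(x) · φ_c(x) = −2c·Q_c(x)^{5/2} + (4/3)·Q_c(x)^{7/2}. -/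
theorem linearized_operator_on_deriv_pow_three_halves
    (c : ℝ) (hc : 0 < c) (Q P φ : ℝ → ℝ)
    (hQ : ∀ x, Q x = (3 * c / 2) * (Real.cosh (Real.sqrt c * x / 2))⁻¹ ^ 2)
    (hP : ∀ x, P x = (Q x) ^ ((3 : ℝ) / 2))
    (hφ : ∀ x, φ x = Real.sqrt c * Real.tanh (Real.sqrt c * x / 2)) :
    ∀ x : ℝ,
      (-(deriv (deriv (deriv P)) x) + c * deriv P x - 2 * Q x * deriv P x
          + (5 * c / 4) * deriv P x) * φ x
        = -(2 * c) * (Q x) ^ ((5 : ℝ) / 2) + (4 / 3) * (Q x) ^ ((7 : ℝ) / 2) := by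
  have hscpos : 0 < Real.sqrt c := Real.sqrt_pos.mpr hc
  set sc := Real.sqrt c with hscdef
  have hsc2 : sc ^ 2 = c := Real.sq_sqrt hc.le
  set K : ℝ := 3 * c / 2 with hKdef
  have hKpos : 0 < K := by positivity
  set K' : ℝ := K ^ ((3:ℝ)/2) with hK'def
  have hgpos : ∀ y : ℝ, 0 < Real.cosh (sc * y / 2) := fun y => Real.cosh_pos _
  have hgne : ∀ y : ℝ, Real.cosh (sc * y / 2) ≠ 0 := fun y => (hgpos y).ne'
  -- closed form for P
  have hPeq : P = fun y => K' * ((Real.cosh (sc * y / 2))⁻¹) ^ 3 := by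
    funext y
    rw [hP, hQ]
    have ht : (0:ℝ) ≤ (Real.cosh (sc * y / 2))⁻¹ := by positivity
    rw [Real.mul_rpow hKpos.le (by positivity)]
    congr 1
    rw [← Real.rpow_natCast ((Real.cosh (sc * y / 2))⁻¹) 2, ← Real.rpow_mul ht,
      ← Real.rpow_natCast ((Real.cosh (sc * y / 2))⁻¹) 3]
    norm_num
  -- derivative of inner functions
  have hlin : ∀ y : ℝ, HasDerivAt (fun z : ℝ => sc * z / 2) (sc / 2) y := by
    intro y
    simpa using ((hasDerivAt_id y).const_mul sc).div_const 2
  have hgd : ∀ y : ℝ, HasDerivAt (fun z : ℝ => Real.cosh (sc * z / 2))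
      (Real.sinh (sc * y / 2) * (sc / 2)) y := by
    intro y
    exact (Real.hasDerivAt_cosh _).comp y (hlin y)
  have hshd : ∀ y : ℝ, HasDerivAt (fun z : ℝ => Real.sinh (sc * z / 2))
      (Real.cosh (sc * y / 2) * (sc / 2)) y := by
    intro y
    exact (Real.hasDerivAt_sinh _).comp y (hlin y)
  have hinvd : ∀ y : ℝ, HasDerivAt (fun z : ℝ => (Real.cosh (sc * z / 2))⁻¹)
      (-(Real.sinh (sc * y / 2) * (sc / 2)) / (Real.cosh (sc * y / 2)) ^ 2) y := by
    intro y
    exact (hgd y).inv (hgne y)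
  set P1 : ℝ → ℝ := fun y =>
    (-3 * (sc/2) * K') * (Real.sinh (sc * y / 2) * ((Real.cosh (sc * y / 2))⁻¹) ^ 4) with hP1def
  set P2 : ℝ → ℝ := fun y =>
    K' * (sc/2)^2 * (9 * ((Real.cosh (sc * y / 2))⁻¹) ^ 3
      - 12 * ((Real.cosh (sc * y / 2))⁻¹) ^ 5) with hP2def
  set P3 : ℝ → ℝ := fun y =>
    K' * (sc/2)^3 * (Real.sinh (sc * y / 2) * (-27 * ((Real.cosh (sc * y / 2))⁻¹) ^ 4
      + 60 * ((Real.cosh (sc * y / 2))⁻¹) ^ 6)) with hP3def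
  have hdP : deriv P = P1 := by
    funext y
    rw [hPeq]
    rw [(((hinvd y).fun_pow 3).const_mul K').deriv]
    have hsh := Real.cosh_sq_sub_sinh_sq (sc * y / 2)
    simp only [hP1def]
    have h := hgne y
    push_cast
    field_simp
  have hdP1 : deriv P1 = P2 := by
    funext y
    have hd : HasDerivAt P1 ((-3 * (sc/2) * K') *
        (Real.cosh (sc * y / 2) * (sc / 2) * ((Real.cosh (sc * y / 2))⁻¹) ^ 4 +
         Real.sinh (sc * y / 2) * ((4:ℕ) * ((Real.cosh (sc * y / 2))⁻¹) ^ 3 *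
           (-(Real.sinh (sc * y / 2) * (sc / 2)) / (Real.cosh (sc * y / 2)) ^ 2)))) y :=
      ((hshd y).mul ((hinvd y).pow 4)).const_mul _
    rw [hd.deriv]
    have hsh : Real.sinh (sc * y / 2) ^ 2 = Real.cosh (sc * y / 2) ^ 2 - 1 := by
      have := Real.cosh_sq_sub_sinh_sq (sc * y / 2); linarith
    simp only [hP2def]
    have h := hgne y
    have hsh4 : Real.sinh (sc * y / 2) ^ 4 = (Real.cosh (sc * y / 2) ^ 2 - 1) ^ 2 := by
      rw [show Real.sinh (sc * y / 2) ^ 4 = (Real.sinh (sc * y / 2) ^ 2) ^ 2 by ring, hsh]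
    set gy := Real.cosh (sc * y / 2) with hgy
    set sy := Real.sinh (sc * y / 2) with hsy
    push_cast
    field_simp
    ring_nf
    simp only [hsh, hsh4]
    ring
  have hdP2 : deriv P2 = P3 := by
    funext y
    have hd : HasDerivAt P2 (K' * (sc/2)^2 *
        (9 * ((3:ℕ) * ((Real.cosh (sc * y / 2))⁻¹) ^ 2 *
           (-(Real.sinh (sc * y / 2) * (sc / 2)) / (Real.cosh (sc * y / 2)) ^ 2)) -
         12 * ((5:ℕ) * ((Real.cosh (sc * y / 2))⁻¹) ^ 4 *
           (-(Real.sinh (sc * y / 2) * (sc / 2)) / (Real.cosh (sc * y / 2)) ^ 2)))) y :=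
      ((((hinvd y).pow 3).const_mul (9:ℝ)).sub (((hinvd y).pow 5).const_mul (12:ℝ))).const_mul _
    rw [hd.deriv]
    simp only [hP3def]
    have h := hgne y
    push_cast
    field_simp
    ring
  intro x
  rw [hdP, hdP1, hdP2, hQ, hφ]
  set g := Real.cosh (sc * x / 2) with hgdef
  set sh := Real.sinh (sc * x / 2) with hshdef
  have hgne' : g ≠ 0 := hgne x
  have hsh : sh ^ 2 = g ^ 2 - 1 := by
    have := Real.cosh_sq_sub_sinh_sq (sc * x / 2); linarith
  have htanh : Real.tanh (sc * x / 2) = sh / g := Real.tanh_eq_sinh_div_cosh _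
  -- rpow of Q
  have hQ52 : (K * (g⁻¹) ^ 2) ^ ((5:ℝ)/2) = K' * K * (g⁻¹) ^ 5 := by
    have ht : (0:ℝ) ≤ g⁻¹ := by positivity
    rw [Real.mul_rpow hKpos.le (by positivity)]
    rw [← Real.rpow_natCast (g⁻¹) 2, ← Real.rpow_mul ht]
    have : ((2:ℕ):ℝ) * ((5:ℝ)/2) = ((5:ℕ):ℝ) := by norm_num
    rw [this, Real.rpow_natCast]
    rw [show (5:ℝ)/2 = 3/2 + 1 by norm_num, Real.rpow_add hKpos, Real.rpow_one, hK'def]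
  have hQ72 : (K * (g⁻¹) ^ 2) ^ ((7:ℝ)/2) = K' * K ^ 2 * (g⁻¹) ^ 7 := by
    have ht : (0:ℝ) ≤ g⁻¹ := by positivity
    rw [Real.mul_rpow hKpos.le (by positivity)]
    rw [← Real.rpow_natCast (g⁻¹) 2, ← Real.rpow_mul ht]
    have : ((2:ℕ):ℝ) * ((7:ℝ)/2) = ((7:ℕ):ℝ) := by norm_num
    rw [this, Real.rpow_natCast]
    rw [show (7:ℝ)/2 = 3/2 + 2 by norm_num, Real.rpow_add hKpos, hK'def,
      show ((2:ℝ)) = ((2:ℕ):ℝ) by norm_num, Real.rpow_natCast]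
  simp only [hP1def, hP2def, hP3def, ← hgdef, ← hshdef, htanh, hQ52, hQ72]
  have hc2 : sc ^ 2 = c := hsc2
  have hsh4 : sh ^ 4 = (g ^ 2 - 1) ^ 2 := by
    rw [show sh ^ 4 = (sh ^ 2) ^ 2 by ring, hsh]
  have hsc4 : sc ^ 4 = c ^ 2 := by
    rw [show sc ^ 4 = (sc ^ 2) ^ 2 by ring, hsc2]
  simp only [hKdef]
  field_simp
  ring_nf
  simp only [hsh, hsh4, hsc2, hsc4]
  ring
end

section
/- Let c > 0, Q_c(x) = (3c/2)·cosh^{-2}(√c·x/2), φ_c(x) = √c·tanh(√c·x/2), and let ℒ_c u = −u'' + c·u − 2·Q_c·u. Then for every x ∈ ℝ: ∂_x((ℒ_c + 5c/4)(Q_c^{3/2}·φ_c))(x) = −(10c/3)·Q_c(x)^{5/2} + (8/3)·Q_c(x)^{7/2}. -/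
lemma my_hlin (b x : ℝ) : HasDerivAt (fun y : ℝ => b * y) b x := by
  simpa using (hasDerivAt_id x).const_mul b

lemma my_hcosh (b x : ℝ) : HasDerivAt (fun y : ℝ => Real.cosh (b * y))
    (Real.sinh (b * x) * b) x := by
  exact (Real.hasDerivAt_cosh (b * x)).comp x (my_hlin b x)

lemma my_hinv (b x : ℝ) : HasDerivAt (fun y : ℝ => (Real.cosh (b * y))⁻¹)
    (-(Real.sinh (b * x) * b) / Real.cosh (b * x) ^ 2) x :=
  (my_hcosh b x).inv (Real.cosh_pos _).ne'

lemma my_hd1 (b x : ℝ) :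
    HasDerivAt (fun y : ℝ => Real.sinh (b * y) * ((Real.cosh (b * y))⁻¹) ^ 4)
      (b * (4 * ((Real.cosh (b * x))⁻¹) ^ 5 - 3 * ((Real.cosh (b * x))⁻¹) ^ 3)) x := by
  have hS := ((Real.hasDerivAt_sinh (b * x)).comp x (my_hlin b x))
  have h := (by exact hS : HasDerivAt (fun y : ℝ => Real.sinh (b * y)) (Real.cosh (b * x) * b) x).mul ((my_hinv b x).pow 4)
  refine h.congr_deriv ?_
  symm
  have hC : Real.cosh (b * x) ≠ 0 := (Real.cosh_pos _).ne'
  have hS2 : Real.sinh (b * x) ^ 2 = Real.cosh (b * x) ^ 2 - 1 := Real.sinh_sq _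
  have hCI : Real.cosh (b * x) * (Real.cosh (b * x))⁻¹ = 1 := mul_inv_cancel₀ hC
  simp only [Pi.pow_apply]
  linear_combination (4 * b * ((Real.cosh (b * x))⁻¹) ^ 5) * hS2 + (b * ((Real.cosh (b * x))⁻¹) ^ 3 * (4 * Real.cosh (b * x) * (Real.cosh (b * x))⁻¹ + 3)) * hCI

lemma my_hd2 (b x : ℝ) :
    HasDerivAt (fun y : ℝ => b * (4 * ((Real.cosh (b * y))⁻¹) ^ 5 - 3 * ((Real.cosh (b * y))⁻¹) ^ 3))
      (b ^ 2 * (9 * Real.sinh (b * x) * ((Real.cosh (b * x))⁻¹) ^ 4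
        - 20 * Real.sinh (b * x) * ((Real.cosh (b * x))⁻¹) ^ 6)) x := by
  have h := ((((my_hinv b x).pow 5).const_mul 4).sub (((my_hinv b x).pow 3).const_mul 3)).const_mul b
  refine h.congr_deriv ?_
  symm
  have hC : Real.cosh (b * x) ≠ 0 := (Real.cosh_pos _).ne'
  ring

lemma my_hd3 (b x : ℝ) :
    HasDerivAt (fun y : ℝ => Real.sinh (b * y) * ((Real.cosh (b * y))⁻¹) ^ 6)
      (b * (6 * ((Real.cosh (b * x))⁻¹) ^ 7 - 5 * ((Real.cosh (b * x))⁻¹) ^ 5)) x := by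
  have hS := ((Real.hasDerivAt_sinh (b * x)).comp x (my_hlin b x))
  have h := (by exact hS : HasDerivAt (fun y : ℝ => Real.sinh (b * y)) (Real.cosh (b * x) * b) x).mul ((my_hinv b x).pow 6)
  refine h.congr_deriv ?_
  symm
  have hC : Real.cosh (b * x) ≠ 0 := (Real.cosh_pos _).ne'
  have hS2 : Real.sinh (b * x) ^ 2 = Real.cosh (b * x) ^ 2 - 1 := Real.sinh_sq _
  have hCI : Real.cosh (b * x) * (Real.cosh (b * x))⁻¹ = 1 := mul_inv_cancel₀ hC
  simp only [Pi.pow_apply]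
  linear_combination (6 * b * ((Real.cosh (b * x))⁻¹) ^ 7) * hS2 + (b * ((Real.cosh (b * x))⁻¹) ^ 5 * (6 * Real.cosh (b * x) * (Real.cosh (b * x))⁻¹ + 5)) * hCI

lemma my_rpow (a k : ℝ) (ha : 0 ≤ a) (hk : 0 ≤ k) (n : ℕ) :
    (a * k ^ 2) ^ ((n : ℝ) / 2) = a ^ ((n : ℝ) / 2) * k ^ n := by
  rw [Real.mul_rpow ha (pow_nonneg hk 2), ← Real.rpow_natCast k 2, ← Real.rpow_mul hk,
    show ((2 : ℕ) : ℝ) * ((n : ℝ) / 2) = (n : ℝ) by push_cast; ring, Real.rpow_natCast]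

theorem deriv_of_linearized_operator_on_pow_three_halves_mul_weight
    (c : ℝ) (hc : 0 < c) (Q P φ g : ℝ → ℝ)
    (hQ : ∀ x, Q x = (3 * c / 2) * (Real.cosh (Real.sqrt c * x / 2))⁻¹ ^ 2)
    (hP : ∀ x, P x = (Q x) ^ ((3 : ℝ) / 2))
    (hφ : ∀ x, φ x = Real.sqrt c * Real.tanh (Real.sqrt c * x / 2))
    (hg : ∀ x, g x = -(deriv (deriv (fun y => P y * φ y)) x)
        + c * (P x * φ x) - 2 * Q x * (P x * φ x) + (5 * c / 4) * (P x * φ x)) :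
    ∀ x : ℝ,
      deriv g x = -(10 * c / 3) * (Q x) ^ ((5 : ℝ) / 2)
        + (8 / 3) * (Q x) ^ ((7 : ℝ) / 2) := by
  intro x
  set b : ℝ := Real.sqrt c / 2 with hb
  set A : ℝ := (3 * c / 2) ^ ((3 : ℝ) / 2) * Real.sqrt c with hA
  have ha : (0 : ℝ) ≤ 3 * c / 2 := by linarith
  have hsq : Real.sqrt c ^ 2 = c := Real.sq_sqrt hc.le
  have harg : ∀ y : ℝ, Real.sqrt c * y / 2 = b * y := fun y => by rw [hb]; ring
  have hIk : ∀ y : ℝ, (0:ℝ) ≤ (Real.cosh (b * y))⁻¹ := fun y =>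
    (inv_nonneg).2 (Real.cosh_pos _).le
  have hCne : ∀ y : ℝ, Real.cosh (b * y) ≠ 0 := fun y => (Real.cosh_pos _).ne'
  -- the product P * φ in closed form
  have hPφ : ∀ y : ℝ, P y * φ y = A * (Real.sinh (b * y) * ((Real.cosh (b * y))⁻¹) ^ 4) := by
    intro y
    rw [hP, hφ, hQ, harg y,
      show ((3:ℝ)/2) = ((3:ℕ):ℝ)/2 by norm_num,
      my_rpow _ _ ha (hIk y) 3, Real.tanh_eq_sinh_div_cosh, hA]
    push_cast
    rw [div_eq_mul_inv]
    ring
  have hfunPφ : (fun y => P y * φ y)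
      = fun y => A * (Real.sinh (b * y) * ((Real.cosh (b * y))⁻¹) ^ 4) := funext hPφ
  have hD1 : deriv (fun y => P y * φ y)
      = fun y => A * (b * (4 * ((Real.cosh (b * y))⁻¹) ^ 5 - 3 * ((Real.cosh (b * y))⁻¹) ^ 3)) := by
    funext y
    rw [hfunPφ]
    exact ((my_hd1 b y).const_mul A).deriv
  have hD2 : ∀ y : ℝ, deriv (deriv (fun y => P y * φ y)) y
      = A * (b ^ 2 * (9 * Real.sinh (b * y) * ((Real.cosh (b * y))⁻¹) ^ 4
        - 20 * Real.sinh (b * y) * ((Real.cosh (b * y))⁻¹) ^ 6)) := by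
    intro y
    rw [hD1]
    exact ((my_hd2 b y).const_mul A).deriv
  have hb2 : b ^ 2 = c / 4 := by rw [hb, div_pow, hsq]; norm_num
  have hgeq : g = fun y => (2 * c * A) * (Real.sinh (b * y) * ((Real.cosh (b * y))⁻¹) ^ 6) := by
    funext y
    rw [hg, hD2 y, hPφ y, hQ, harg y]
    linear_combination (-(A * (9 * Real.sinh (b * y) * ((Real.cosh (b * y))⁻¹) ^ 4
      - 20 * Real.sinh (b * y) * ((Real.cosh (b * y))⁻¹) ^ 6))) * hb2
  have hdg : deriv g x = (2 * c * A) * (b * (6 * ((Real.cosh (b * x))⁻¹) ^ 7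
      - 5 * ((Real.cosh (b * x))⁻¹) ^ 5)) := by
    rw [hgeq]
    exact ((my_hd3 b x).const_mul (2 * c * A)).deriv
  rw [hdg, hQ, harg x,
    show ((5:ℝ)/2) = ((5:ℕ):ℝ)/2 by norm_num,
    show ((7:ℝ)/2) = ((7:ℕ):ℝ)/2 by norm_num,
    my_rpow _ _ ha (hIk x) 5, my_rpow _ _ ha (hIk x) 7]
  have h5 : (3 * c / 2) ^ (((5:ℕ):ℝ) / 2) = (3 * c / 2) ^ ((3:ℝ)/2) * (3 * c / 2) := by
    rw [show (((5:ℕ):ℝ)/2) = (3:ℝ)/2 + 1 by norm_num,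
      Real.rpow_add (by linarith : (0:ℝ) < 3 * c / 2), Real.rpow_one]
  have h7 : (3 * c / 2) ^ (((7:ℕ):ℝ) / 2) = (3 * c / 2) ^ ((3:ℝ)/2) * (3 * c / 2) ^ (2:ℕ) := by
    rw [show (((7:ℕ):ℝ)/2) = (3:ℝ)/2 + 2 by norm_num,
      Real.rpow_add (by linarith : (0:ℝ) < 3 * c / 2),
      show ((2:ℝ)) = ((2:ℕ):ℝ) by norm_num, Real.rpow_natCast]
  rw [h5, h7, hA, hb]
  set t := (3 * c / 2) ^ ((3:ℝ)/2)
  set I := (Real.cosh (Real.sqrt c / 2 * x))⁻¹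
  linear_combination (c * t * (6 * I ^ 7 - 5 * I ^ 5)) * hsq
end

section
/- Let c > 0 and Q_c(x) = (3c/2)·cosh^{-2}(√c·x/2). Then ∫_ℝ Q_c(x)^{5/2} dx = √(9/10)·(∫_ℝ Q_c(x)^{7/2} dx)^{1/2}·(∫_ℝ Q_c(x)^{3/2} dx)^{1/2}. -/
open MeasureTheory

private lemma sech_pow_integrable (n : ℕ) (hn : 1 ≤ n) :
    Integrable (fun x : ℝ => ((Real.cosh x)⁻¹) ^ n) := by
  have hbound : Integrable (fun x : ℝ => 2 * Real.exp (-|x|)) := by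
    have h1 : IntegrableOn (fun x : ℝ => Real.exp (-|x|)) (Set.Ioi 0) := by
      refine (exp_neg_integrableOn_Ioi 0 one_pos).congr_fun ?_ measurableSet_Ioi
      intro x hx; simp [abs_of_pos (Set.mem_Ioi.mp hx)]
    have h2 : IntegrableOn (fun x : ℝ => Real.exp (-|x|)) (Set.Iic 0) := by
      refine (integrableOn_exp_Iic 0).congr_fun ?_ measurableSet_Iic
      intro x hx; simp [abs_of_nonpos (Set.mem_Iic.mp hx)]
    have := h2.union h1
    rw [Set.Iic_union_Ioi] at this
    exact (integrableOn_univ.mp this).const_mul 2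
  refine hbound.mono' ?_ ?_
  · exact (Continuous.inv₀ Real.continuous_cosh (fun x => (Real.cosh_pos x).ne')).pow n |>.aestronglyMeasurable
  · refine Filter.Eventually.of_forall fun x => ?_
    have hc1 : 1 ≤ Real.cosh x := Real.one_le_cosh x
    have hcp : 0 < Real.cosh x := Real.cosh_pos x
    have hinv : (Real.cosh x)⁻¹ ≤ 2 * Real.exp (-|x|) := by
      have h : Real.exp |x| / 2 ≤ Real.cosh x := by
        rw [Real.cosh_eq]
        rcases abs_cases x with ⟨h, _⟩ | ⟨h, _⟩ <;> rw [h] <;>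
          [nlinarith [Real.exp_pos (-x)]; nlinarith [Real.exp_pos x]]
      have h2 : (Real.cosh x)⁻¹ ≤ (Real.exp |x| / 2)⁻¹ :=
        inv_anti₀ (by positivity) h
      calc (Real.cosh x)⁻¹ ≤ (Real.exp |x| / 2)⁻¹ := h2
        _ = 2 * Real.exp (-|x|) := by rw [Real.exp_neg]; field_simp
    have hle1 : (Real.cosh x)⁻¹ ≤ 1 := inv_le_one_of_one_le₀ hc1
    have hpos : 0 < (Real.cosh x)⁻¹ := inv_pos.mpr hcp
    rw [Real.norm_eq_abs, abs_of_pos (pow_pos hpos n)]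
    calc ((Real.cosh x)⁻¹) ^ n ≤ ((Real.cosh x)⁻¹) ^ 1 :=
          pow_le_pow_of_le_one hpos.le hle1 hn
      _ = (Real.cosh x)⁻¹ := pow_one _
      _ ≤ 2 * Real.exp (-|x|) := hinv

private lemma sech_pow_integrable' (a : ℝ) (ha : a ≠ 0) (n : ℕ) (hn : 1 ≤ n) :
    Integrable (fun x : ℝ => ((Real.cosh (a * x))⁻¹) ^ n) :=
  (MeasureTheory.integrable_comp_mul_left_iff (fun x : ℝ => ((Real.cosh x)⁻¹) ^ n) ha).mpr
    (sech_pow_integrable n hn)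

private lemma sech_rec (a : ℝ) (ha : 0 < a) (n : ℕ) (hn : 1 ≤ n)
    (In : Integrable (fun x : ℝ => ((Real.cosh (a * x))⁻¹) ^ n))
    (In2 : Integrable (fun x : ℝ => ((Real.cosh (a * x))⁻¹) ^ (n + 2))) :
    ((n : ℝ) + 1) * ∫ x : ℝ, ((Real.cosh (a * x))⁻¹) ^ (n + 2)
      = (n : ℝ) * ∫ x : ℝ, ((Real.cosh (a * x))⁻¹) ^ n := by
  set F : ℝ → ℝ := fun x => Real.sinh (a * x) * ((Real.cosh (a * x))⁻¹) ^ (n + 1) with hF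
  set G : ℝ → ℝ := fun x =>
    a * (((n : ℝ) + 1) * ((Real.cosh (a * x))⁻¹) ^ (n + 2) - (n : ℝ) * ((Real.cosh (a * x))⁻¹) ^ n)
    with hG
  have hderiv : ∀ x : ℝ, HasDerivAt F (G x) x := by
    intro x
    have hax : HasDerivAt (fun x : ℝ => a * x) a x := by
      simpa using (hasDerivAt_id x).const_mul a
    have hs : HasDerivAt (fun x : ℝ => Real.sinh (a * x)) (Real.cosh (a * x) * a) x :=
      (Real.hasDerivAt_sinh (a * x)).comp x hax
    have hcne : Real.cosh (a * x) ≠ 0 := (Real.cosh_pos (a * x)).ne'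
    have hc : HasDerivAt (fun x : ℝ => Real.cosh (a * x)) (Real.sinh (a * x) * a) x :=
      (Real.hasDerivAt_cosh (a * x)).comp x hax
    have hcinv : HasDerivAt (fun x : ℝ => (Real.cosh (a * x))⁻¹)
        (-(Real.sinh (a * x) * a) / Real.cosh (a * x) ^ 2) x := hc.inv hcne
    have hpow : HasDerivAt (fun x : ℝ => ((Real.cosh (a * x))⁻¹) ^ (n + 1))
        ((n + 1 : ℕ) * ((Real.cosh (a * x))⁻¹) ^ n *
          (-(Real.sinh (a * x) * a) / Real.cosh (a * x) ^ 2)) x := by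
      exact hcinv.pow (n + 1)
    have := hs.mul hpow
    refine this.congr_deriv ?_; symm
    rw [hG]
    have hsq : Real.sinh (a * x) ^ 2 = Real.cosh (a * x) ^ 2 - 1 := by
      have := Real.cosh_sq (a * x); linarith
    have e1 : Real.cosh (a*x) * ((Real.cosh (a*x))⁻¹) ^ (n+1) = ((Real.cosh (a*x))⁻¹) ^ n := by
      rw [pow_succ', ← mul_assoc, mul_inv_cancel₀ hcne, one_mul]
    have e2 : Real.cosh (a*x) ^ 2 * ((Real.cosh (a*x))⁻¹) ^ (n+2) = ((Real.cosh (a*x))⁻¹) ^ n := by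
      rw [pow_add, mul_left_comm, ← mul_pow, mul_inv_cancel₀ hcne, one_pow, mul_one]
    push_cast
    linear_combination (((n:ℝ)+1) * a * ((Real.cosh (a*x))⁻¹)^(n+2)) * hsq
      + (((n:ℝ)+1) * a) * e2 + (-a) * e1
  have hFint : Integrable F := by
    refine In.mono' ?_ ?_
    · exact (Real.continuous_sinh.comp (continuous_const.mul continuous_id)).mul
        (((Real.continuous_cosh.comp (continuous_const.mul continuous_id)).inv₀
          (fun x => (Real.cosh_pos _).ne')).pow _) |>.aestronglyMeasurable
    · refine Filter.Eventually.of_forall fun x => ?_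
      have hcp : 0 < Real.cosh (a * x) := Real.cosh_pos _
      have h1 : |Real.sinh (a * x)| ≤ Real.cosh (a * x) := by
        rcases abs_cases (Real.sinh (a*x)) with ⟨h, _⟩ | ⟨h, _⟩ <;> rw [h] <;>
          nlinarith [Real.sinh_lt_cosh (a*x), Real.cosh_pos (a*x), Real.cosh_sq (a*x)]
      rw [Real.norm_eq_abs, abs_mul, abs_pow, abs_inv, abs_of_pos hcp]
      calc |Real.sinh (a*x)| * ((Real.cosh (a*x))⁻¹) ^ (n+1)
          ≤ Real.cosh (a*x) * ((Real.cosh (a*x))⁻¹) ^ (n+1) := by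
            apply mul_le_mul_of_nonneg_right h1 (by positivity)
        _ = ((Real.cosh (a*x))⁻¹) ^ n := by
            rw [pow_succ', ← mul_assoc, mul_inv_cancel₀ hcp.ne', one_mul]
  have hGint : Integrable G := ((In2.const_mul _).sub (In.const_mul _)).const_mul a
  have hzero : ∫ x : ℝ, G x = 0 :=
    integral_eq_zero_of_hasDerivAt_of_integrable hderiv hGint hFint
  rw [hG] at hzero
  simp only [integral_const_mul] at hzero
  rw [integral_sub (In2.const_mul _) (In.const_mul _),
    integral_const_mul, integral_const_mul] at hzero
  have := mul_eq_zero.mp hzero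
  rcases this with h | h
  · exact absurd h ha.ne'
  · linarith

theorem soliton_five_halves_integral_identity
    (c : ℝ) (hc : 0 < c) (Q : ℝ → ℝ)
    (hQ : ∀ x, Q x = (3 * c / 2) * (Real.cosh (Real.sqrt c * x / 2))⁻¹ ^ 2) :
    ∫ x : ℝ, (Q x) ^ ((5 : ℝ) / 2)
      = Real.sqrt (9 / 10) * (∫ x : ℝ, (Q x) ^ ((7 : ℝ) / 2)) ^ ((1 : ℝ) / 2)
          * (∫ x : ℝ, (Q x) ^ ((3 : ℝ) / 2)) ^ ((1 : ℝ) / 2) := by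
  set a : ℝ := Real.sqrt c / 2 with ha_def
  have ha : 0 < a := by
    rw [ha_def]; positivity
  have I3 := sech_pow_integrable' a ha.ne' 3 (by norm_num)
  have I5 := sech_pow_integrable' a ha.ne' 5 (by norm_num)
  have I7 := sech_pow_integrable' a ha.ne' 7 (by norm_num)
  have rec1 := sech_rec a ha 3 (by norm_num) I3 I5
  have rec2 := sech_rec a ha 5 (by norm_num) I5 I7
  push_cast at rec1 rec2
  have hK : 0 < 3 * c / 2 := by linarith
  have key : ∀ (m : ℕ) (x : ℝ), Q x ^ ((m : ℝ)/2)
      = (3*c/2) ^ ((m:ℝ)/2) * ((Real.cosh (a*x))⁻¹) ^ m := by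
    intro m x
    rw [hQ x, show Real.sqrt c * x / 2 = a * x by rw [ha_def]; ring]
    set t : ℝ := (Real.cosh (a*x))⁻¹ with ht_def
    have ht : 0 ≤ t := by positivity
    rw [Real.mul_rpow hK.le (by positivity)]
    congr 1
    rw [← Real.rpow_natCast t 2, ← Real.rpow_mul ht,
      show (((2:ℕ)):ℝ) * ((m:ℝ)/2) = (m:ℝ) by push_cast; ring, Real.rpow_natCast]
  have k3 := fun x => key 3 x
  have k5 := fun x => key 5 x
  have k7 := fun x => key 7 x
  push_cast at k3 k5 k7
  simp_rw [k3, k5, k7, integral_const_mul]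
  set J3 := ∫ x : ℝ, ((Real.cosh (a*x))⁻¹) ^ 3 with hJ3
  set J5 := ∫ x : ℝ, ((Real.cosh (a*x))⁻¹) ^ 5 with hJ5
  set J7 := ∫ x : ℝ, ((Real.cosh (a*x))⁻¹) ^ 7 with hJ7
  have hJ3nn : 0 ≤ J3 := integral_nonneg (fun x => by positivity)
  have h5 : J5 = 3/4 * J3 := by linarith
  have h7 : J7 = 5/8 * J3 := by linarith
  rw [h5, h7]
  rw [← Real.sqrt_eq_rpow, ← Real.sqrt_eq_rpow]
  have hKpow : (3*c/2) ^ ((7:ℝ)/2) * (3*c/2) ^ ((3:ℝ)/2)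
      = ((3*c/2) ^ ((5:ℝ)/2)) ^ 2 := by
    rw [← Real.rpow_add hK, sq, ← Real.rpow_add hK]
    norm_num
  rw [← Real.sqrt_mul (by norm_num : (0:ℝ) ≤ 9/10), ← Real.sqrt_mul (by positivity)]
  rw [show 9/10 * ((3*c/2) ^ ((7:ℝ)/2) * (5/8 * J3)) * ((3*c/2) ^ ((3:ℝ)/2) * J3)
      = ((3*c/2) ^ ((5:ℝ)/2) * (3/4 * J3)) ^ 2 by
    linear_combination ((9:ℝ)/16 * J3^2) * hKpow]
  rw [Real.sqrt_sq (by positivity)]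
end
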